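/- Let Γ be a group. Let P(T) ∈ 𝒪_E[[T]] be a power series with zero constant term whose reduction modulo 𝔪_E equals T^q and whose coefficient of T is nonzero. Suppose given a family (F_g(T))_{g∈Γ} of power series in 𝒪_E[[T]] with zero constant term such that: (i) F_h(F_g(T)) = F_{gh}(T) for all g,h ∈ Γ; (ii) F_g(P(T)) = P(F_g(T)) for all g ∈ Γ; and (iii) the reduction of F_g modulo 𝔪_E equals T if and only if g = 1. Then the map sending g to the coefficient of T in F_g is an injective group homomorphism Γ → 𝒪_E^×; in particular Γ is abelian. -/

import Mathlib

open PowerSeries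

/-- Formal substitution `f(g)` of a power series `g` with zero constant term into a power
series `f`. -/
noncomputable def PowerSeries.comp {R : Type*} [CommRing R] (f g : PowerSeries R) :
    PowerSeries R :=
  PowerSeries.mk fun n => ∑ k ∈ Finset.range (n + 1), coeff (R := R) k f * coeff (R := R) n (g ^ k)

/-- The ring of integers of an ultrametric normed field: elements of norm at most `1`. -/
noncomputable def ringOfIntegers (E : Type*) [NormedField E] [IsUltrametricDist E] :
    Subring E where
  carrier := {x | ‖x‖ ≤ 1}
  mul_mem' := fun {a b} ha hb => by
    simpa [norm_mul] using mul_le_one₀ ha (norm_nonneg _) hb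
  one_mem' := by simp
  add_mem' := fun {a b} ha hb =>
    le_trans (IsUltrametricDist.norm_add_le_max a b) (max_le ha hb)
  zero_mem' := by simp
  neg_mem' := fun {a} ha => by simpa using ha

/-- The maximal ideal of the ring of integers: elements of norm less than `1`. -/
noncomputable def maxIdeal (E : Type*) [NormedField E] [IsUltrametricDist E] :
    Ideal (ringOfIntegers E) where
  carrier := {x | ‖(x : E)‖ < 1}
  add_mem' := fun {a b} ha hb =>
    lt_of_le_of_lt (IsUltrametricDist.norm_add_le_max (a : E) (b : E)) (max_lt ha hb)
  zero_mem' := by simp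
  smul_mem' := fun c x hx => by
    have hc : ‖(c : E)‖ ≤ 1 := c.2
    calc ‖((c • x : ringOfIntegers E) : E)‖ = ‖(c : E)‖ * ‖(x : E)‖ := by
          simp [norm_mul]
      _ ≤ 1 * ‖(x : E)‖ := by gcongr
      _ < 1 := by simpa using hx


open Finset in
lemma coeff_comp' {K : Type*} [CommRing K] (f g : PowerSeries K) (n : ℕ) :
    coeff (R := K) n (f.comp g) = ∑ k ∈ range (n + 1), coeff (R := K) k f * coeff (R := K) n (g ^ k) := by
  simp [PowerSeries.comp, coeff_mk]

lemma coeff_one_comp {K : Type*} [CommRing K] (f g : PowerSeries K) :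
    coeff (R := K) 1 (f.comp g) = coeff (R := K) 1 f * coeff (R := K) 1 g := by
  rw [coeff_comp']
  simp [Finset.sum_range_succ, PowerSeries.coeff_one]

open Finset in
lemma eq_X_of_comm_aux {K : Type*} [Field K] (P G : PowerSeries K)
    (hP0 : constantCoeff (R := K) P = 0) (hG0 : constantCoeff (R := K) G = 0)
    (hG1 : coeff (R := K) 1 G = 1) (hπ0 : coeff (R := K) 1 P ≠ 0)
    (hπn : ∀ m : ℕ, 2 ≤ m → coeff (R := K) 1 P ^ m ≠ coeff (R := K) 1 P)
    (hcomm : G.comp P = P.comp G) : G = X := by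
  obtain ⟨R, hR⟩ := PowerSeries.X_dvd_iff.mpr hP0
  have hRc : constantCoeff (R := K) R = coeff (R := K) 1 P := by
    rw [hR, ← coeff_zero_eq_constantCoeff]
    exact (PowerSeries.coeff_succ_X_mul 0 R).symm
  have hPk_zero : ∀ k n : ℕ, n < k → coeff (R := K) n (P ^ k) = 0 := by
    intro k n h
    have hdvd : (X : PowerSeries K) ^ k ∣ P ^ k := pow_dvd_pow_of_dvd ⟨R, hR⟩ k
    exact PowerSeries.X_pow_dvd_iff.mp hdvd n h
  have hPn : ∀ n : ℕ, coeff (R := K) n (P ^ n) = coeff (R := K) 1 P ^ n := by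
    intro n
    rw [← hRc, hR, mul_pow]
    have := PowerSeries.coeff_X_pow_mul (R ^ n) n 0
    simpa [coeff_zero_eq_constantCoeff] using this
  ext n
  induction n using Nat.strong_induction_on with
  | _ n IH =>
  match n, IH with
  | 0, _ => simpa using hG0
  | 1, _ => simpa using hG1
  | (m + 2), IH =>
    set N := m + 2 with hN
    have hN2 : 2 ≤ N := by omega
    set d := coeff (R := K) N G with hd
    have hGk : ∀ k, k < N → coeff (R := K) k G = coeff (R := K) k X := fun k hk => IH k hk
    have hGpow : ∀ k, 2 ≤ k → coeff (R := K) N (G ^ k) = coeff (R := K) N (X ^ k) := by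
      intro k hk
      have h0 : coeff (R := K) N (G ^ k - X ^ k) = 0 := by
        rw [← geom_sum₂_mul G X k, PowerSeries.coeff_mul]
        apply Finset.sum_eq_zero
        intro pr hpr
        have hsum : pr.1 + pr.2 = N := Finset.HasAntidiagonal.mem_antidiagonal.mp hpr
        by_cases h2 : pr.2 = N
        · have hp1 : pr.1 = 0 := by omega
          have hS : coeff (R := K) 0 (∑ i ∈ range k, G ^ i * X ^ (k - 1 - i)) = 0 := by
            rw [map_sum]
            apply Finset.sum_eq_zero
            intro i hi
            simp only [coeff_zero_eq_constantCoeff, map_mul, map_pow, hG0,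
              PowerSeries.constantCoeff_X]
            rcases Nat.eq_zero_or_pos i with h | h
            · subst h
              rw [zero_pow (by omega : k - 1 - 0 ≠ 0)]
              ring
            · rw [zero_pow (by omega : i ≠ 0)]
              ring
          rw [hp1, hS, zero_mul]
        · have hlt : pr.2 < N := by omega
          have : coeff (R := K) pr.2 (G - X) = 0 := by
            rw [map_sub, hGk pr.2 hlt, sub_self]
          rw [this, mul_zero]
      rw [map_sub] at h0
      exact sub_eq_zero.mp h0
    have hL : coeff (R := K) N (G.comp P) = coeff (R := K) N P + d * coeff (R := K) 1 P ^ N := by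
      rw [coeff_comp', Finset.sum_range_succ]
      have h1 : ∑ k ∈ range N, coeff (R := K) k G * coeff (R := K) N (P ^ k) = coeff (R := K) N P := by
        rw [Finset.sum_eq_single 1]
        · rw [hG1, one_mul, pow_one]
        · intro k hk hk1
          have hkN : k < N := Finset.mem_range.mp hk
          rcases Nat.eq_zero_or_pos k with h | h
          · subst h
            simp [coeff_zero_eq_constantCoeff, hG0]
          · have : coeff (R := K) k G = 0 := by
              rw [hGk k hkN, PowerSeries.coeff_X, if_neg hk1]
            rw [this, zero_mul]
        · intro h
          exact absurd (Finset.mem_range.mpr (by omega)) h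
      rw [h1, hPn N]
    have hRhs : coeff (R := K) N (P.comp G) = coeff (R := K) N P + coeff (R := K) 1 P * d := by
      rw [coeff_comp']
      have hterm : ∀ k ∈ range (N + 1), coeff (R := K) k P * coeff (R := K) N (G ^ k) =
          coeff (R := K) k P * coeff (R := K) N (X ^ k) + (if k = 1 then coeff (R := K) 1 P * d else 0) := by
        intro k _
        match k with
        | 0 => simp
        | 1 =>
          rw [pow_one, pow_one, if_pos rfl, PowerSeries.coeff_X, if_neg (by omega : ¬ N = 1), hd]
          ring
        | (j + 2) =>
          rw [hGpow (j + 2) (by omega), if_neg (by omega), add_zero]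
      rw [Finset.sum_congr rfl hterm, Finset.sum_add_distrib]
      congr 1
      · have : ∀ k ∈ range (N + 1), coeff (R := K) k P * coeff (R := K) N ((X : PowerSeries K) ^ k) =
            if N = k then coeff (R := K) k P else 0 := by
          intro k _
          rw [PowerSeries.coeff_X_pow]
          split_ifs <;> ring
        rw [Finset.sum_congr rfl this, Finset.sum_ite_eq (range (N + 1)) N,
          if_pos (Finset.mem_range.mpr (by omega))]
      · rw [Finset.sum_ite_eq' (range (N + 1)) 1 (fun _ => coeff (R := K) 1 P * d),
          if_pos (Finset.mem_range.mpr (by omega))]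
    have heq : coeff (R := K) N P + d * coeff (R := K) 1 P ^ N = coeff (R := K) N P + coeff (R := K) 1 P * d := by
      rw [← hL, ← hRhs, hcomm]
    have heq2 : d * coeff (R := K) 1 P ^ N = d * coeff (R := K) 1 P := by
      have := add_left_cancel heq
      rw [this]; ring
    have hd0 : d = 0 := by
      by_contra hdd
      exact hπn N hN2 (mul_left_cancel₀ hdd heq2)
    rw [PowerSeries.coeff_X, if_neg (by omega : ¬ N = 1)]
    exact hd0

/-- Let `Γ` be a group, `P ∈ 𝒪_E[[T]]` with zero constant term, reduction
`T^q` modulo `𝔪_E`, and nonzero coefficient of `T`. Given series `F_g ∈ 𝒪_E[[T]]` with zero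
constant term such that `F_h(F_g(T)) = F_{gh}(T)`, `F_g(P(T)) = P(F_g(T))`, and the reduction
of `F_g` mod `𝔪_E` is `T` iff `g = 1`, the map `g ↦ (coefficient of T in F_g)` is an
injective group homomorphism `Γ → 𝒪_E^×`; in particular `Γ` is abelian. -/
theorem coeff_one_injective_hom_of_lift
    {p : ℕ} [Fact p.Prime] (E : Type*) [NormedField E] [IsUltrametricDist E]
    [NormedAlgebra ℚ_[p] E] [FiniteDimensional ℚ_[p] E]
    (q : ℕ) (hq : q = Nat.card ((ringOfIntegers E) ⧸ (maxIdeal E)))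
    (Γ : Type*) [Group Γ]
    (P : PowerSeries E) (hPint : ∀ n, ‖coeff (R := E) n P‖ ≤ 1)
    (hP0 : constantCoeff (R := E) P = 0)
    (hPred : ∀ n, ‖coeff (R := E) n (P - X ^ q)‖ < 1)
    (hP1 : coeff (R := E) 1 P ≠ 0)
    (F : Γ → PowerSeries E)
    (hFint : ∀ g, ∀ n, ‖coeff (R := E) n (F g)‖ ≤ 1)
    (hF0 : ∀ g, constantCoeff (R := E) (F g) = 0)
    (hFmul : ∀ g h : Γ, (F h).comp (F g) = F (g * h))
    (hFP : ∀ g, (F g).comp P = P.comp (F g))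
    (hFone : ∀ g, (∀ n, ‖coeff (R := E) n (F g - X)‖ < 1) ↔ g = 1) :
    (∀ g, ‖coeff (R := E) 1 (F g)‖ = 1) ∧
      (∀ g h : Γ, coeff (R := E) 1 (F (g * h)) = coeff (R := E) 1 (F g) * coeff (R := E) 1 (F h)) ∧
      Function.Injective (fun g => coeff (R := E) 1 (F g)) ∧
      ∀ g h : Γ, g * h = h * g := by
  have hq1 : q ≠ 1 := by
    intro h
    have hnt : Nontrivial ((ringOfIntegers E) ⧸ (maxIdeal E)) := by
      refine Ideal.Quotient.nontrivial_iff.mpr ?_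
      intro htop
      have hmem : (1 : ringOfIntegers E) ∈ maxIdeal E := htop ▸ Submodule.mem_top
      have h1 : ‖((1 : ringOfIntegers E) : E)‖ < 1 := hmem
      simp at h1
    have hcard : Nat.card ((ringOfIntegers E) ⧸ (maxIdeal E)) = 1 := (h.symm.trans hq).symm
    exact absurd (Nat.card_eq_one_iff_unique.mp hcard).1 (not_subsingleton _)
  have hπ : ‖coeff (R := E) 1 P‖ < 1 := by
    have h := hPred 1
    rwa [map_sub, PowerSeries.coeff_X_pow, if_neg (fun h' => hq1 h'.symm), sub_zero] at h
  have hmul : ∀ g h : Γ, coeff (R := E) 1 (F (g * h)) = coeff (R := E) 1 (F g) * coeff (R := E) 1 (F h) := by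
    intro g h
    rw [← hFmul g h, coeff_one_comp, mul_comm]
  have hone : coeff (R := E) 1 (F 1) = 1 := by
    have h2 : coeff (R := E) 1 (F 1) * coeff (R := E) 1 (F 1) = coeff (R := E) 1 (F 1) * 1 := by
      rw [mul_one, ← hmul, one_mul]
    have hne : coeff (R := E) 1 (F 1) ≠ 0 := by
      intro h0
      have h3 := (hFone 1).mpr rfl 1
      rw [map_sub, h0, PowerSeries.coeff_one_X, zero_sub, norm_neg, norm_one] at h3
      exact lt_irrefl 1 h3
    exact mul_left_cancel₀ hne h2
  have hinvone : ∀ g : Γ, coeff (R := E) 1 (F g) * coeff (R := E) 1 (F g⁻¹) = 1 := by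
    intro g
    calc coeff (R := E) 1 (F g) * coeff (R := E) 1 (F g⁻¹) = coeff (R := E) 1 (F (g * g⁻¹)) := (hmul g g⁻¹).symm
      _ = 1 := by rw [mul_inv_cancel]; exact hone
  have hnorm : ∀ g, ‖coeff (R := E) 1 (F g)‖ = 1 := by
    intro g
    have h1 : ‖coeff (R := E) 1 (F g)‖ * ‖coeff (R := E) 1 (F g⁻¹)‖ = 1 := by
      rw [← norm_mul, hinvone g, norm_one]
    have hle := hFint g 1
    have hle' := hFint g⁻¹ 1
    nlinarith [norm_nonneg (coeff (R := E) 1 (F g)), norm_nonneg (coeff (R := E) 1 (F g⁻¹))]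
  have hπn : ∀ m : ℕ, 2 ≤ m → coeff (R := E) 1 P ^ m ≠ coeff (R := E) 1 P := by
    intro m hm h
    have h2 : ‖coeff (R := E) 1 P‖ ^ m = ‖coeff (R := E) 1 P‖ := by rw [← norm_pow, h]
    have h3 : 0 < ‖coeff (R := E) 1 P‖ := norm_pos_iff.mpr hP1
    have h4 : ‖coeff (R := E) 1 P‖ ^ m < ‖coeff (R := E) 1 P‖ ^ 1 :=
      pow_lt_pow_right_of_lt_one₀ h3 hπ (by omega)
    rw [pow_one] at h4
    linarith
  have hket : ∀ k : Γ, coeff (R := E) 1 (F k) = 1 → k = 1 := by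
    intro k hk
    have hFkX : F k = X :=
      eq_X_of_comm_aux P (F k) hP0 (hF0 k) hk hP1 hπn (hFP k)
    refine (hFone k).mp ?_
    intro n
    rw [hFkX, sub_self, map_zero, norm_zero]
    exact one_pos
  have hinj : Function.Injective (fun g => coeff (R := E) 1 (F g)) := by
    intro g h hgh
    simp only at hgh
    have h1 : coeff (R := E) 1 (F (g * h⁻¹)) = 1 := by
      rw [hmul, hgh]
      exact hinvone h
    exact mul_inv_eq_one.mp (hket _ h1)
  refine ⟨hnorm, hmul, hinj, ?_⟩
  intro g h
  apply hinj
  simp only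
  rw [hmul, hmul, mul_comm]
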